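/- Let H be a connected k-uniform hypergraph with at least one edge, maximum degree Δ, minimum degree δ, and signless Laplacian eigenpair (ρ, x). Then (δ/Δ)·γ(H) ≤ Γ(H) ≤ γ(H). Moreover, if H is regular then both inequalities are equalities. -/
import Mathlib


open Finset Matrix

variable {V : Type*} [Fintype V] [DecidableEq V]

/-- The incidence matrix of a hypergraph with vertex type `V` and edge set `E`:
`B(v,e) = 1` if `v ∈ e` and `0` otherwise. -/
def inc (E : Finset (Finset V)) : Matrix V ↥E ℝ :=
  fun v e => if v ∈ (e : Finset V) then 1 else 0

/-- The signless Laplacian matrix `Q = B * Bᵀ`. -/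
def signlessLap (E : Finset (Finset V)) : Matrix V V ℝ :=
  inc E * (inc E)ᵀ

/-- The degree of a vertex: the number of edges containing it. -/
def deg (E : Finset (Finset V)) (v : V) : ℕ :=
  (E.filter fun e => v ∈ e).card

/-- A hypergraph is connected if the reflexive-transitive closure of the relation
"`u ≠ v` and some edge contains both `u` and `v`" relates every pair of vertices. -/
def HConnected (E : Finset (Finset V)) : Prop :=
  ∀ u v : V, Relation.ReflTransGen (fun a b => a ≠ b ∧ ∃ e ∈ E, a ∈ e ∧ b ∈ e) u v

/-- A hypergraph is regular if all vertices have the same degree. -/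
def HRegular (E : Finset (Finset V)) : Prop :=
  ∃ r, ∀ v : V, deg E v = r

/-- A signless Laplacian eigenpair `(ρ, x)`: `x` is entrywise positive,
normalized by `∑ v, x v ^ 2 = 1`, and `Q x = ρ x`. -/
def Eigenpair (E : Finset (Finset V)) (ρ : ℝ) (x : V → ℝ) : Prop :=
  (∀ v, 0 < x v) ∧ (∑ v, x v ^ 2 = 1) ∧ (signlessLap E).mulVec x = ρ • x

lemma eig_point (E : Finset (Finset V)) (x : V → ℝ) (v : V) :
    (signlessLap E).mulVec x v = ∑ e ∈ E.filter (fun e => v ∈ e), ∑ w ∈ e, x w := by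
  rw [signlessLap, ← mulVec_mulVec]
  have h1 : (inc E)ᵀ.mulVec x = fun e : ↥E => ∑ w ∈ (e : Finset V), x w := by
    funext e
    simp [Matrix.mulVec, inc, dotProduct, ite_mul, Finset.sum_ite_mem]
  rw [h1]
  simp only [Matrix.mulVec, inc, dotProduct, ite_mul, one_mul, zero_mul]
  rw [Finset.sum_coe_sort E (fun e => if v ∈ e then ∑ w ∈ e, x w else 0), Finset.sum_filter]

lemma deg_pos (E : Finset (Finset V)) (hconn : HConnected E) (hE : E.Nonempty)
    (k : ℕ) (hk : 2 ≤ k) (hunif : ∀ e ∈ E, e.card = k) (v : V) : 0 < deg E v := by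
  obtain ⟨e, he⟩ := hE
  have hcard : e.card = k := hunif e he
  obtain ⟨u, hu⟩ : e.Nonempty := by
    rw [← Finset.card_pos, hcard]; omega
  have hedge : ∃ f ∈ E, v ∈ f := by
    rcases (hconn v u).cases_head with h | ⟨b, ⟨_, f, hf, hvf, _⟩, _⟩
    · exact ⟨e, he, h ▸ hu⟩
    · exact ⟨f, hf, hvf⟩
  obtain ⟨f, hf, hvf⟩ := hedge
  rw [deg, Finset.card_pos]
  exact ⟨f, Finset.mem_filter.mpr ⟨hf, hvf⟩⟩

/-- For a connected `k`-graph with at least one edge, maximum degree `Δ`, minimum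
degree `δ` and signless Laplacian eigenpair `(ρ, x)`:
`(δ/Δ) γ(H) ≤ Γ(H) ≤ γ(H)`, where `γ(H) = x_max/x_min` and `Γ(H) = x(max)/x(min)`;
if `H` is regular both are equalities. -/
theorem Gamma_between {V : Type*} [Fintype V] [DecidableEq V] (k : ℕ)
    (hk : 2 ≤ k) (E : Finset (Finset V)) (hunif : ∀ e ∈ E, e.card = k)
    (hconn : HConnected E) (hE : E.Nonempty)
    (ρ : ℝ) (x : V → ℝ) (hx : Eigenpair E ρ x)
    (Δ δ : ℕ) (hΔ : IsGreatest (Set.range (deg E)) Δ) (hδ : IsLeast (Set.range (deg E)) δ)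
    (xmax xmin : ℝ) (hmax : IsGreatest (Set.range x) xmax)
    (hmin : IsLeast (Set.range x) xmin)
    (xemax xemin : ℝ)
    (hemax : IsGreatest ((fun e : Finset V => ∑ v ∈ e, x v) '' ↑E) xemax)
    (hemin : IsLeast ((fun e : Finset V => ∑ v ∈ e, x v) '' ↑E) xemin) :
    ((δ : ℝ) / (Δ : ℝ) * (xmax / xmin) ≤ xemax / xemin ∧
        xemax / xemin ≤ xmax / xmin) ∧
      (HRegular E →
        (δ : ℝ) / (Δ : ℝ) * (xmax / xmin) = xemax / xemin ∧
          xemax / xemin = xmax / xmin) := by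
  obtain ⟨hxpos, hnorm, heig⟩ := hx
  -- pointwise eigen-equation
  have heq : ∀ v, ∑ e ∈ E.filter (fun e => v ∈ e), ∑ w ∈ e, x w = ρ * x v := by
    intro v
    rw [← eig_point, heig]; rfl
  -- basic positivity
  obtain ⟨u, hu⟩ := hmax.1
  obtain ⟨w, hw⟩ := hmin.1
  have hxminpos : 0 < xmin := hw ▸ hxpos w
  have hminmax : xmin ≤ xmax := hu ▸ hmin.2 (Set.mem_range_self u)
  have hxmaxpos : 0 < xmax := lt_of_lt_of_le hxminpos hminmax
  -- edge sum bounds via k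
  have hemax_le : ∀ e ∈ E, (∑ v ∈ e, x v) ≤ k * xmax := by
    intro e he
    calc (∑ v ∈ e, x v) ≤ e.card • xmax :=
          Finset.sum_le_card_nsmul e x xmax (fun v _ => hu ▸ hmax.2 (Set.mem_range_self v))
      _ = k * xmax := by rw [hunif e he]; simp [nsmul_eq_mul]
  have hemin_ge : ∀ e ∈ E, (k : ℝ) * xmin ≤ ∑ v ∈ e, x v := by
    intro e he
    calc (k : ℝ) * xmin = e.card • xmin := by rw [hunif e he]; simp [nsmul_eq_mul]
      _ ≤ ∑ v ∈ e, x v :=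
          Finset.card_nsmul_le_sum e x xmin (fun v _ => hw ▸ hmin.2 (Set.mem_range_self v))
  obtain ⟨emax, hemaxE, hemaxeq⟩ := hemax.1
  obtain ⟨emin, heminE, hemineq⟩ := hemin.1
  have hxemax_le : xemax ≤ k * xmax := hemaxeq ▸ hemax_le emax hemaxE
  have hxemin_ge : (k : ℝ) * xmin ≤ xemin := hemineq ▸ hemin_ge emin heminE
  have hxeminpos : 0 < xemin := lt_of_lt_of_le (by positivity) hxemin_ge
  have hxemaxpos : 0 < xemax :=
    lt_of_lt_of_le hxeminpos (hemax.2 (hemin.1))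
  -- degrees
  have hdegpos : ∀ v, 0 < deg E v := deg_pos E hconn hE k hk hunif
  have hδpos : 0 < δ := by
    obtain ⟨b, hb⟩ := hδ.1
    exact hb ▸ hdegpos b
  have hΔpos : 0 < Δ := by
    obtain ⟨a, ha⟩ := hΔ.1
    exact ha ▸ hdegpos a
  -- bounds on ρ * x v
  have hub : ∀ v, ρ * x v ≤ (deg E v : ℝ) * xemax := by
    intro v
    rw [← heq v]
    calc ∑ e ∈ E.filter (fun e => v ∈ e), ∑ w' ∈ e, x w'
        ≤ (E.filter (fun e => v ∈ e)).card • xemax := by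
          apply Finset.sum_le_card_nsmul
          intro e he
          exact hemax.2 ⟨e, (Finset.mem_filter.mp he).1, rfl⟩
      _ = (deg E v : ℝ) * xemax := by rw [deg]; simp [nsmul_eq_mul]
  have hlb : ∀ v, (deg E v : ℝ) * xemin ≤ ρ * x v := by
    intro v
    rw [← heq v]
    calc (deg E v : ℝ) * xemin = (E.filter (fun e => v ∈ e)).card • xemin := by
          rw [deg]; simp [nsmul_eq_mul]
      _ ≤ ∑ e ∈ E.filter (fun e => v ∈ e), ∑ w' ∈ e, x w' := by
          apply Finset.card_nsmul_le_sum
          intro e he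
          exact hemin.2 ⟨e, (Finset.mem_filter.mp he).1, rfl⟩
  -- upper inequality Γ ≤ γ
  have hupper : xemax / xemin ≤ xmax / xmin := by
    rw [div_le_div_iff₀ hxeminpos hxminpos]
    nlinarith [hxemax_le, hxemin_ge, hxmaxpos.le, hxminpos.le]
  -- lower inequality
  have h1 : ρ * xmax ≤ (Δ : ℝ) * xemax := by
    have := hub u
    rw [hu] at this
    refine this.trans ?_
    have : (deg E u : ℝ) ≤ Δ := Nat.cast_le.mpr (hΔ.2 (Set.mem_range_self u))
    nlinarith [hxemaxpos.le]
  have h2 : (δ : ℝ) * xemin ≤ ρ * xmin := by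
    have := hlb w
    rw [hw] at this
    refine le_trans ?_ this
    have : (δ : ℝ) ≤ (deg E w : ℝ) := Nat.cast_le.mpr (hδ.2 (Set.mem_range_self w))
    nlinarith [hxeminpos.le]
  have hlower : (δ : ℝ) / (Δ : ℝ) * (xmax / xmin) ≤ xemax / xemin := by
    have hΔR : (0:ℝ) < Δ := by exact_mod_cast hΔpos
    rw [div_mul_div_comm, div_le_div_iff₀ (by positivity) (by positivity)]
    nlinarith [hxmaxpos.le, hxminpos.le, hxemaxpos.le, hxeminpos.le]
  refine ⟨⟨hlower, hupper⟩, ?_⟩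
  rintro ⟨r, hr⟩
  have hΔr : Δ = r := by obtain ⟨a, ha⟩ := hΔ.1; rw [← ha, hr a]
  have hδr : δ = r := by obtain ⟨b, hb⟩ := hδ.1; rw [← hb, hr b]
  have hratio : (δ : ℝ) / (Δ : ℝ) = 1 := by
    rw [hΔr, hδr, div_self]
    have : 0 < r := hΔr ▸ hΔpos
    exact_mod_cast this.ne'
  have heq1 : xemax / xemin = xmax / xmin := by
    apply le_antisymm hupper
    calc xmax / xmin = (δ : ℝ) / (Δ : ℝ) * (xmax / xmin) := by rw [hratio, one_mul]
      _ ≤ xemax / xemin := hlower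
  exact ⟨by rw [hratio, one_mul, heq1], heq1⟩
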